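/- Suppose ω ≠ 0, g ≠ 0, κ > 0, γ > 0 and d ∈ (−1,1). Then the only constant solution of the Maxwell–Bloch equations is (A, S, D) ≡ (0, 0, d). Equivalently: if A₀, S₀ ∈ ℂ and D₀ ∈ ℝ satisfy −(κ + iω)A₀ + g S₀ = 0, −(γ + iω)S₀ + g A₀ D₀ = 0 and −4g Re( conj(A₀) S₀ ) − 2γ(D₀ − d) = 0, then A₀ = 0, S₀ = 0 and D₀ = d. -/

import Mathlib

/-- **Uniqueness of the constant solution of the Maxwell–Bloch equations.**
If `ω ≠ 0`, `g ≠ 0`, `κ, γ > 0` and `d ∈ (-1,1)`, then the only equilibrium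
`(A₀, S₀, D₀)` of the Maxwell–Bloch (complex Lorenz) system is `(0, 0, d)`. -/
theorem maxwell_bloch_unique_constant_solution
    (ω g κ γ d : ℝ) (hω : ω ≠ 0) (hg : g ≠ 0) (hκ : 0 < κ) (hγ : 0 < γ)
    (hd : -1 < d ∧ d < 1)
    (A₀ S₀ : ℂ) (D₀ : ℝ)
    (h1 : -((κ : ℂ) + (ω : ℂ) * Complex.I) * A₀ + (g : ℂ) * S₀ = 0)
    (h2 : -((γ : ℂ) + (ω : ℂ) * Complex.I) * S₀ + (g : ℂ) * A₀ * (D₀ : ℂ) = 0)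
    (h3 : -4 * g * ((starRingEnd ℂ) A₀ * S₀).re - 2 * γ * (D₀ - d) = 0) :
    A₀ = 0 ∧ S₀ = 0 ∧ D₀ = d := by
  have hgC : (g : ℂ) ≠ 0 := by exact_mod_cast hg
  -- key: A₀ * ((γ+iω)(κ+iω) - g²D₀) = 0
  have key : A₀ * (((γ : ℂ) + (ω : ℂ) * Complex.I) * ((κ : ℂ) + (ω : ℂ) * Complex.I)
      - (g : ℂ)^2 * (D₀ : ℂ)) = 0 := by
    have e1 : (g : ℂ) * S₀ = ((κ : ℂ) + (ω : ℂ) * Complex.I) * A₀ := by linear_combination h1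
    have e2 : ((γ : ℂ) + (ω : ℂ) * Complex.I) * S₀ = (g : ℂ) * A₀ * (D₀ : ℂ) := by
      linear_combination -h2
    have := congrArg (fun z => ((γ : ℂ) + (ω : ℂ) * Complex.I) * z) e1
    rw [mul_left_comm, e2] at this
    linear_combination -this
  have hfac : (((γ : ℂ) + (ω : ℂ) * Complex.I) * ((κ : ℂ) + (ω : ℂ) * Complex.I)
      - (g : ℂ)^2 * (D₀ : ℂ)) ≠ 0 := by
    intro h
    have him := congrArg Complex.im h
    simp [Complex.add_im, Complex.mul_im, ← Complex.ofReal_pow] at him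
    have : ω * (γ + κ) = 0 := by push_cast at him ⊢; nlinarith [him]
    rcases mul_eq_zero.1 this with h' | h'
    · exact hω h'
    · nlinarith
  have hA : A₀ = 0 := by
    rcases mul_eq_zero.1 key with h | h
    · exact h
    · exact absurd h hfac
  have hS : S₀ = 0 := by
    have : (g : ℂ) * S₀ = 0 := by rw [hA] at h1; linear_combination h1
    exact (mul_eq_zero.1 this).resolve_left hgC |>.symm ▸ rfl
  have hD : D₀ = d := by
    rw [hA, hS] at h3
    simp at h3
    rcases h3 with h | h
    · exact absurd h (ne_of_gt hγ)
    · linarith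
  exact ⟨hA, hS, hD⟩
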